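/- For every positive integer n and integer k ≥ 2, and any arithmetic function g, one has ∑_{d₁⋯d_k = n} g(gcd(d₁,…,d_k)) = ∑_{a^k · b = n} (μ * g)(a) · τ_k(b), where μ * g denotes Dirichlet convolution and τ_k is the k-fold divisor function. -/
import Mathlib

open Finset ArithmeticFunction

/-- `∑_{d₁⋯d_k = n} g(gcd(d₁,…,d_k)) = ∑_{a^k b = n} (μ*g)(a) τ_k(b)`. -/
theorem stmt0 {R : Type*} [CommRing R] (g : ℕ → R) (n k : ℕ) (hn : 0 < n) (hk : 2 ≤ k) :
    ∑ d ∈ (Fintype.piFinset fun _ : Fin k => n.divisors).filter (fun f => ∏ i, f i = n),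
        g (Finset.univ.gcd d)
    = ∑ p ∈ (n.divisors ×ˢ n.divisors).filter (fun p => p.1 ^ k * p.2 = n),
        (∑ q ∈ p.1.divisorsAntidiagonal, (moebius q.1 : R) * g q.2) *
          (((Fintype.piFinset fun _ : Fin k => p.2.divisors).filter
              (fun f => ∏ i, f i = p.2)).card : R) := by
  classical
  have hk0 : k ≠ 0 := by omega
  set h : ℕ → R := fun a => ∑ q ∈ a.divisorsAntidiagonal, (moebius q.1 : R) * g q.2 with hh
  have hmob : ∀ m > 0, ∑ a ∈ m.divisors, h a = g m := by
    refine sum_eq_iff_sum_smul_moebius_eq.mpr ?_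
    intro m hm
    simp [hh, zsmul_eq_mul]
  set T : Finset (ℕ × (Fin k → ℕ)) :=
    (n.divisors ×ˢ (Fintype.piFinset fun _ : Fin k => n.divisors)).filter
      (fun p => p.1 ^ k * ∏ i, p.2 i = n) with hT
  have hTmem : ∀ p : ℕ × (Fin k → ℕ), p ∈ T ↔
      (p.1 ∈ n.divisors ∧ ∀ i, p.2 i ∈ n.divisors) ∧ p.1 ^ k * ∏ i, p.2 i = n := by
    intro p
    simp [hT, Finset.mem_filter, Finset.mem_product, Fintype.mem_piFinset, and_assoc]
  -- LHS = ∑_{p ∈ T} h p.1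
  have hL : ∑ d ∈ (Fintype.piFinset fun _ : Fin k => n.divisors).filter
        (fun f => ∏ i, f i = n), g (Finset.univ.gcd d) = ∑ p ∈ T, h p.1 := by
    have step1 : ∀ d ∈ (Fintype.piFinset fun _ : Fin k => n.divisors).filter
        (fun f => ∏ i, f i = n), g (Finset.univ.gcd d)
        = ∑ a ∈ (Finset.univ.gcd d).divisors, h a := by
      intro d hd
      simp only [Finset.mem_filter, Fintype.mem_piFinset] at hd
      have h0 : d ⟨0, by omega⟩ ≠ 0 := (Nat.pos_of_mem_divisors (hd.1 _)).ne'
      have hgcd : Finset.univ.gcd d ≠ 0 := fun hc =>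
        h0 (Finset.gcd_eq_zero_iff.mp hc ⟨0, by omega⟩ (Finset.mem_univ _))
      exact (hmob _ (Nat.pos_of_ne_zero hgcd)).symm
    rw [Finset.sum_congr rfl step1, Finset.sum_sigma']
    refine Finset.sum_nbij' (fun x => (x.2, fun i => x.1 i / x.2))
      (fun p => ⟨fun i => p.1 * p.2 i, p.1⟩) ?_ ?_ ?_ ?_ ?_
    · rintro ⟨d, a⟩ hx
      simp only [Finset.mem_sigma, Finset.mem_filter, Fintype.mem_piFinset,
        Nat.mem_divisors] at hx
      obtain ⟨⟨hdmem, hprod⟩, hadvd, hgcd0⟩ := hx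
      have hai : ∀ i, a ∣ d i := fun i =>
        hadvd.trans (Finset.gcd_dvd (Finset.mem_univ i))
      rw [hTmem]
      have hrec : ∀ i, a * (d i / a) = d i := fun i => Nat.mul_div_cancel' (hai i)
      have key : a ^ k * ∏ i, d i / a = n := by
        rw [← hprod, ← Finset.prod_congr rfl (fun i _ => (hrec i)),
          Finset.prod_mul_distrib, Finset.prod_const, Finset.card_univ,
          Fintype.card_fin]
      refine ⟨⟨Nat.mem_divisors.mpr ⟨?_, hn.ne'⟩, fun i => Nat.mem_divisors.mpr
        ⟨(Nat.div_dvd_of_dvd (hai i)).trans (hdmem i).1, hn.ne'⟩⟩, key⟩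
      exact (hai ⟨0, by omega⟩).trans (hdmem _).1
    · rintro ⟨a, e⟩ hp
      rw [hTmem] at hp
      obtain ⟨⟨ha, he⟩, hpr⟩ := hp
      have ha0 : a ≠ 0 := (Nat.pos_of_mem_divisors ha).ne'
      have hdvd : ∀ i, a * e i ∣ n := by
        intro i
        rw [← hpr]
        exact mul_dvd_mul (dvd_pow_self a hk0) (Finset.dvd_prod_of_mem _ (Finset.mem_univ i))
      have hprodd : ∏ i, a * e i = n := by
        rw [Finset.prod_mul_distrib, Finset.prod_const, Finset.card_univ, Fintype.card_fin, hpr]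
      simp only [Finset.mem_sigma, Finset.mem_filter, Fintype.mem_piFinset, Nat.mem_divisors]
      refine ⟨⟨fun i => ⟨hdvd i, hn.ne'⟩, hprodd⟩, ?_, ?_⟩
      · exact Finset.dvd_gcd (fun i _ => Dvd.intro (e i) rfl)
      · intro hc
        have h0 := Finset.gcd_eq_zero_iff.mp hc ⟨0, by omega⟩ (Finset.mem_univ _)
        exact (mul_ne_zero ha0 (Nat.pos_of_mem_divisors (he ⟨0, by omega⟩)).ne') h0
    · rintro ⟨d, a⟩ hx
      simp only [Finset.mem_sigma, Finset.mem_filter, Fintype.mem_piFinset,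
        Nat.mem_divisors] at hx
      obtain ⟨⟨hdmem, hprod⟩, hadvd, hgcd0⟩ := hx
      have hai : ∀ i, a ∣ d i := fun i =>
        hadvd.trans (Finset.gcd_dvd (Finset.mem_univ i))
      exact congrArg (fun f => (⟨f, a⟩ : Σ _ : Fin k → ℕ, ℕ))
        (funext fun i => Nat.mul_div_cancel' (hai i))
    · rintro ⟨a, e⟩ hp
      rw [hTmem] at hp
      have ha0 : a ≠ 0 := (Nat.pos_of_mem_divisors hp.1.1).ne'
      exact congrArg (Prod.mk a)
        (funext fun i => Nat.mul_div_cancel_left _ (Nat.pos_of_ne_zero ha0))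
    · rintro ⟨d, a⟩ _
      rfl
  -- combine
  -- RHS = ∑_{p ∈ T} h p.1
  have step2 : ∀ p ∈ (n.divisors ×ˢ n.divisors).filter (fun p : ℕ × ℕ => p.1 ^ k * p.2 = n),
      (h p.1) * (((Fintype.piFinset fun _ : Fin k => p.2.divisors).filter
          (fun f => ∏ i, f i = p.2)).card : R)
      = ∑ _e ∈ (Fintype.piFinset fun _ : Fin k => p.2.divisors).filter
          (fun f => ∏ i, f i = p.2), h p.1 := by
    intro p _
    rw [Finset.sum_const, nsmul_eq_mul, mul_comm]
  have hR : ∑ p ∈ (n.divisors ×ˢ n.divisors).filter (fun p : ℕ × ℕ => p.1 ^ k * p.2 = n),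
      (h p.1) * (((Fintype.piFinset fun _ : Fin k => p.2.divisors).filter
          (fun f => ∏ i, f i = p.2)).card : R) = ∑ p ∈ T, h p.1 := by
    rw [Finset.sum_congr rfl step2, Finset.sum_sigma']
    refine Finset.sum_nbij' (fun x => (x.1.1, x.2)) (fun p => ⟨(p.1, ∏ i, p.2 i), p.2⟩)
      ?_ ?_ ?_ ?_ ?_
    · rintro ⟨⟨a, b⟩, e⟩ hx
      simp only [Finset.mem_sigma, Finset.mem_filter, Finset.mem_product,
        Fintype.mem_piFinset, Nat.mem_divisors] at hx
      obtain ⟨⟨⟨ha, hb⟩, hab⟩, hemem, hep⟩ := hx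
      rw [hTmem]
      refine ⟨⟨Nat.mem_divisors.mpr ha, fun i => Nat.mem_divisors.mpr
        ⟨(hemem i).1.trans hb.1, hn.ne'⟩⟩, by rw [hep]; exact hab⟩
    · rintro ⟨a, e⟩ hp
      rw [hTmem] at hp
      obtain ⟨⟨ha, he⟩, hpr⟩ := hp
      have hbdvd : (∏ i, e i) ∣ n := ⟨a ^ k, by rw [← hpr]; ring⟩
      have hb0 : (∏ i, e i) ≠ 0 := fun hc => hn.ne' (by rw [← hpr, hc, mul_zero])
      simp only [Finset.mem_sigma, Finset.mem_filter, Finset.mem_product,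
        Fintype.mem_piFinset, Nat.mem_divisors]
      exact ⟨⟨⟨Nat.mem_divisors.mp ha, ⟨hbdvd, hn.ne'⟩⟩, hpr⟩,
        fun i => ⟨Finset.dvd_prod_of_mem _ (Finset.mem_univ i), hb0⟩, trivial⟩
    · rintro ⟨⟨a, b⟩, e⟩ hx
      simp only [Finset.mem_sigma, Finset.mem_filter] at hx
      exact congrArg (fun b => (⟨(a, b), e⟩ : Σ _ : ℕ × ℕ, Fin k → ℕ)) hx.2.2
    · rintro ⟨a, e⟩ _
      rfl
    · rintro ⟨⟨a, b⟩, e⟩ _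
      rfl
  rw [hL, ← hR]
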